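/- (Differentiation under the Jackson–Nörlund integral) Let s ∈ I with s ≠ ω₀, let θ̄ > 0, θ₀ ∈ (−θ̄, θ̄), and let g : I × (−θ̄, θ̄) → ℝ be differentiable at θ₀ uniformly in [s]_{q,ω}. Suppose that G(θ) := ∫_{ω₀}^s g(t,θ) d_{q,ω}t exists for all θ in a neighborhood of θ₀ and that ∫_{ω₀}^s ∂₂g(t,θ₀) d_{q,ω}t exists. Then G is differentiable at θ₀ and G′(θ₀) = ∫_{ω₀}^s ∂₂g(t,θ₀) d_{q,ω}t. -/

import Mathlib

noncomputable section

namespace Hahn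

/-- The fixed point `ω₀ = ω/(1-q)` of `t ↦ qt+ω`. -/
def omega0 (q ω : ℝ) : ℝ := ω / (1 - q)

/-- The Hahn difference operator of `f` (viewed as a function on the interval `I`):
for `t ≠ ω₀` it is `(f(qt+ω) - f(t))/((q-1)t+ω)`, and at `ω₀` it is the derivative of `f`
at `ω₀` (within `I`). -/
def hahnD (q ω : ℝ) (I : Set ℝ) (f : ℝ → ℝ) (t : ℝ) : ℝ :=
  if t = omega0 q ω then derivWithin f I t
  else (f (q * t + ω) - f t) / ((q - 1) * t + ω)

/-- `f` is `q,ω`-differentiable on `I`: the only nontrivial requirement is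
differentiability at `ω₀` (for `t ≠ ω₀` the Hahn quotient always exists). -/
def HahnDiffOn (q ω : ℝ) (I : Set ℝ) (f : ℝ → ℝ) : Prop :=
  DifferentiableWithinAt ℝ f I (omega0 q ω)

/-- The `q`-bracket `[k]_q = (1-q^k)/(1-q)`. -/
def qnum (q : ℝ) (k : ℕ) : ℝ := (1 - q ^ k) / (1 - q)

/-- The `k`-th term of the Jackson–Nörlund series of `f` at `x`. -/
def jnTerm (q ω : ℝ) (f : ℝ → ℝ) (x : ℝ) (k : ℕ) : ℝ :=
  q ^ k * f (q ^ k * x + ω * qnum q k)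

/-- The Jackson–Nörlund series of `f` converges at `x`. -/
def JNSummable (q ω : ℝ) (f : ℝ → ℝ) (x : ℝ) : Prop :=
  Summable (jnTerm q ω f x)

/-- The Jackson–Nörlund integral `∫_{ω₀}^x f(t) d_{q,ω}t`. -/
def jnInt0 (q ω : ℝ) (f : ℝ → ℝ) (x : ℝ) : ℝ :=
  (x * (1 - q) - ω) * ∑' k : ℕ, jnTerm q ω f x k

/-- The Jackson–Nörlund integral `∫_a^b f(t) d_{q,ω}t`. -/
def jnInt (q ω : ℝ) (f : ℝ → ℝ) (a b : ℝ) : ℝ :=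
  jnInt0 q ω f b - jnInt0 q ω f a

/-- `f` is `q,ω`-integrable on `[a,b]`. -/
def JNIntegrable (q ω : ℝ) (f : ℝ → ℝ) (a b : ℝ) : Prop :=
  JNSummable q ω f a ∧ JNSummable q ω f b

/-- The set `[s]_{q,ω} = {q^n s + ω[n]_q : n ∈ ℕ} ∪ {ω₀}`. -/
def qwOrbit (q ω s : ℝ) : Set ℝ :=
  {x | ∃ n : ℕ, x = q ^ n * s + ω * qnum q n} ∪ {omega0 q ω}

/-- The `q,ω`-interval `[a,b]_{q,ω}`. -/
def qwInterval (q ω a b : ℝ) : Set ℝ :=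
  qwOrbit q ω a ∪ qwOrbit q ω b

/-- Auxiliary: bound on the difference of two summable series. -/
theorem abs_tsum_sub_le {f g b : ℕ → ℝ} (hf : Summable f) (hg : Summable g)
    (hb : Summable b) (h : ∀ k, |f k - g k| ≤ b k) :
    |(∑' k, f k) - (∑' k, g k)| ≤ ∑' k, b k := by
  rw [← hf.tsum_sub hg, ← Real.norm_eq_abs]
  have habs : Summable (fun k => ‖f k - g k‖) :=
    hb.of_nonneg_of_le (fun k => norm_nonneg _) (by simpa [Real.norm_eq_abs] using h)
  refine le_trans (norm_tsum_le_tsum_norm habs) ?_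
  exact Summable.tsum_le_tsum (by simpa [Real.norm_eq_abs] using h) habs hb

set_option maxHeartbeats 1000000


/-- differentiation under the Jackson–Nörlund integral sign. -/
theorem deriv_under_jn_integral
    (q ω : ℝ) (hq : 0 < q) (hq1 : q < 1) (hω : 0 ≤ ω)
    (I : Set ℝ) (hI : I.OrdConnected) (hmem : omega0 q ω ∈ I)
    (s : ℝ) (hs : s ∈ I) (hsω : s ≠ omega0 q ω)
    (θbar θ₀ : ℝ) (hθbar : 0 < θbar) (hθ₀ : θ₀ ∈ Set.Ioo (-θbar) θbar)
    (g : ℝ → ℝ → ℝ)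
    -- `g(t,·)` is differentiable at `θ₀` uniformly in `[s]_{q,ω}`:
    (hdiff : ∀ t ∈ qwOrbit q ω s, DifferentiableAt ℝ (fun θ => g t θ) θ₀)
    (hunif : ∀ ε : ℝ, 0 < ε → ∃ δ : ℝ, 0 < δ ∧ ∀ θ : ℝ, 0 < |θ - θ₀| → |θ - θ₀| < δ →
      ∀ t ∈ qwOrbit q ω s,
        |(g t θ - g t θ₀) / (θ - θ₀) - deriv (fun θ' => g t θ') θ₀| < ε)
    -- `G(θ) = ∫_{ω₀}^s g(t,θ) d_{q,ω}t` exists for `θ` near `θ₀`: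
    (hG : ∃ r : ℝ, 0 < r ∧ ∀ θ : ℝ, |θ - θ₀| < r → JNSummable q ω (fun t => g t θ) s)
    -- `∫_{ω₀}^s ∂₂g(t,θ₀) d_{q,ω}t` exists:
    (hpd : JNSummable q ω (fun t => deriv (fun θ' => g t θ') θ₀) s) :
    HasDerivAt (fun θ => jnInt0 q ω (fun t => g t θ) s)
      (jnInt0 q ω (fun t => deriv (fun θ' => g t θ') θ₀) s) θ₀ := by
  obtain ⟨r, hr, hGr⟩ := hG
  have h1q : (0:ℝ) < 1 - q := by linarith
  -- the mesh points
  have htmem : ∀ k : ℕ, (q ^ k * s + ω * qnum q k) ∈ qwOrbit q ω s :=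
    fun k => Or.inl ⟨k, rfl⟩
  have hpd' : Summable (fun k : ℕ => q ^ k * deriv (fun θ' => g (q ^ k * s + ω * qnum q k) θ') θ₀) := hpd
  have hsum : HasDerivAt (fun θ => ∑' k : ℕ, q ^ k * g (q ^ k * s + ω * qnum q k) θ)
      (∑' k : ℕ, q ^ k * deriv (fun θ' => g (q ^ k * s + ω * qnum q k) θ') θ₀) θ₀ := by
    rw [hasDerivAt_iff_tendsto_slope, Metric.tendsto_nhdsWithin_nhds]
    intro ε hε
    have hε' : 0 < ε * (1 - q) / 2 := by positivity
    obtain ⟨δ, hδ, hδ'⟩ := hunif _ hε'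
    refine ⟨min δ r, lt_min hδ hr, ?_⟩
    intro θ hθne hθd
    simp only [Set.mem_compl_iff, Set.mem_singleton_iff] at hθne
    rw [Real.dist_eq] at hθd ⊢
    have habsδ : |θ - θ₀| < δ := lt_of_lt_of_le hθd (min_le_left _ _)
    have habsr : |θ - θ₀| < r := lt_of_lt_of_le hθd (min_le_right _ _)
    have hne : θ - θ₀ ≠ 0 := sub_ne_zero.mpr hθne
    have hpos : 0 < |θ - θ₀| := abs_pos.mpr hne
    have hSθ : Summable (fun k : ℕ => q ^ k * g (q ^ k * s + ω * qnum q k) θ) := hGr θ habsr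
    have hS0 : Summable (fun k : ℕ => q ^ k * g (q ^ k * s + ω * qnum q k) θ₀) :=
      hGr θ₀ (by simpa using hr)
    -- the difference-quotient series
    have hQ : Summable (fun k : ℕ =>
        q ^ k * ((g (q ^ k * s + ω * qnum q k) θ - g (q ^ k * s + ω * qnum q k) θ₀) / (θ - θ₀))) := by
      have := ((hSθ.sub hS0).mul_left (θ - θ₀)⁻¹)
      refine this.congr fun k => ?_
      field_simp
    have hslope : slope (fun θ => ∑' k : ℕ, q ^ k * g (q ^ k * s + ω * qnum q k) θ) θ₀ θ
        = ∑' k : ℕ,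
          q ^ k * ((g (q ^ k * s + ω * qnum q k) θ - g (q ^ k * s + ω * qnum q k) θ₀) / (θ - θ₀)) := by
      rw [slope_def_field]
      rw [div_eq_inv_mul, ← hSθ.tsum_sub hS0, ← tsum_mul_left]
      congr 1
      funext k
      field_simp
    rw [hslope]
    -- bound the difference of the two series
    have hdiffsum : Summable (fun k : ℕ =>
        q ^ k * ((g (q ^ k * s + ω * qnum q k) θ - g (q ^ k * s + ω * qnum q k) θ₀) / (θ - θ₀))
        - q ^ k * deriv (fun θ' => g (q ^ k * s + ω * qnum q k) θ') θ₀) := hQ.sub hpd'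
    have hbound : ∀ k : ℕ,
        |q ^ k * ((g (q ^ k * s + ω * qnum q k) θ - g (q ^ k * s + ω * qnum q k) θ₀) / (θ - θ₀))
        - q ^ k * deriv (fun θ' => g (q ^ k * s + ω * qnum q k) θ') θ₀| ≤ (ε * (1 - q) / 2) * q ^ k := by
      intro k
      rw [← mul_sub, abs_mul, abs_of_pos (pow_pos hq k), mul_comm]
      exact mul_le_mul_of_nonneg_right
        (le_of_lt (hδ' θ hpos habsδ _ (htmem k))) (le_of_lt (pow_pos hq k))
    have hgeo : Summable (fun k : ℕ => (ε * (1 - q) / 2) * q ^ k) :=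
      (summable_geometric_of_lt_one (le_of_lt hq) hq1).mul_left _
    have hval : ∑' k : ℕ, (ε * (1 - q) / 2) * q ^ k = ε / 2 := by
      rw [tsum_mul_left, tsum_geometric_of_lt_one (le_of_lt hq) hq1]
      field_simp
    have := abs_tsum_sub_le hQ hpd' hgeo hbound
    rw [hval] at this
    exact lt_of_le_of_lt this (by linarith)
  have := hsum.const_mul (s * (1 - q) - ω)
  simpa [jnInt0, jnTerm] using this

end Hahn
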